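/- Let λ be a nonzero real number. There exists a function u : [0,1] → ℂ, not identically zero, twice differentiable with u″(x) = −λ²·u(x) for all x ∈ [0,1] and satisfying the moment conditions μ₀(u) = 0 and μ₁(u) = 0, if and only if λ·sin λ + 2·cos λ − 2 = 0. Moreover, in this case every such u is a scalar multiple of the function x ↦ (sin λ − λ)·cos(λx) + (1 − cos λ)·sin(λx); i.e., each such eigenvalue is simple. -/

import Mathlib

open MeasureTheory intervalIntegral

/-- `μ₀(g) = ∫₀¹ g(x) dx` -/
noncomputable def mu0 (g : ℝ → ℂ) : ℂ := ∫ x in (0:ℝ)..1, g x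

/-- `μ₁(g) = ∫₀¹ (1−x) g(x) dx` -/
noncomputable def mu1 (g : ℝ → ℂ) : ℂ := ∫ x in (0:ℝ)..1, ((1 - x : ℝ) : ℂ) * g x

lemma hasDerivAt_om (x : ℝ) : HasDerivAt (fun y : ℝ => ((1-y:ℝ):ℂ)) (-1) x := by
  have := ((hasDerivAt_id x).const_sub 1).ofReal_comp
  simpa using this

lemma hasDerivAt_ccos (a x : ℝ) :
    HasDerivAt (fun y : ℝ => Complex.cos ((a*y:ℝ):ℂ)) (-((a:ℂ) * Complex.sin ((a*x:ℝ):ℂ))) x := by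
  have h1 : HasDerivAt (fun z : ℂ => Complex.cos ((a:ℂ)*z)) (-Complex.sin ((a:ℂ)*(x:ℂ)) * ((a:ℂ)*1)) (x:ℂ) :=
    (Complex.hasDerivAt_cos _).comp _ ((hasDerivAt_id _).const_mul _)
  have h2 := h1.comp_ofReal
  push_cast
  convert h2 using 1
  ring

lemma hasDerivAt_csin (a x : ℝ) :
    HasDerivAt (fun y : ℝ => Complex.sin ((a*y:ℝ):ℂ)) ((a:ℂ) * Complex.cos ((a*x:ℝ):ℂ)) x := by
  have h1 : HasDerivAt (fun z : ℂ => Complex.sin ((a:ℂ)*z)) (Complex.cos ((a:ℂ)*(x:ℂ)) * ((a:ℂ)*1)) (x:ℂ) :=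
    (Complex.hasDerivAt_sin _).comp _ ((hasDerivAt_id _).const_mul _)
  have h2 := h1.comp_ofReal
  push_cast
  convert h2 using 1
  ring

lemma hasDerivAt_cexp (c : ℂ) (x : ℝ) :
    HasDerivAt (fun y : ℝ => Complex.exp (c*y)) (c * Complex.exp (c*x)) x := by
  have h1 : HasDerivAt (fun z : ℂ => Complex.exp (c*z)) (Complex.exp (c*(x:ℂ)) * (c*1)) (x:ℂ) :=
    (Complex.hasDerivAt_exp _).comp _ ((hasDerivAt_id _).const_mul _)
  have h2 := h1.comp_ofReal
  convert h2 using 1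
  ring

/-- Every solution of `u'' = -λ² u` on `[0,1]` is `u(0) cos(λx) + (u'(0)/λ) sin(λx)`. -/
lemma rep (lam : ℝ) (hlam : lam ≠ 0) (u u' : ℝ → ℂ)
    (hd1 : ∀ x ∈ Set.Icc (0:ℝ) 1, HasDerivWithinAt u (u' x) (Set.Icc (0:ℝ) 1) x)
    (hd2 : ∀ x ∈ Set.Icc (0:ℝ) 1, HasDerivWithinAt u' (-(lam:ℂ)^2 * u x) (Set.Icc (0:ℝ) 1) x) :
    ∀ x ∈ Set.Icc (0:ℝ) 1,
      u x = u 0 * Complex.cos ((lam*x:ℝ):ℂ) + (u' 0 / lam) * Complex.sin ((lam*x:ℝ):ℂ) := by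
  have hl : (lam:ℂ) ≠ 0 := Complex.ofReal_ne_zero.mpr hlam
  set A : ℂ := u 0 with hA
  set B : ℂ := u' 0 / lam with hB
  set v : ℝ → ℂ := fun x => A * Complex.cos ((lam*x:ℝ):ℂ) + B * Complex.sin ((lam*x:ℝ):ℂ) with hv
  set v' : ℝ → ℂ := fun x => -(A * lam) * Complex.sin ((lam*x:ℝ):ℂ) + u' 0 * Complex.cos ((lam*x:ℝ):ℂ) with hv'
  have hv1 : ∀ x : ℝ, HasDerivAt v (v' x) x := by
    intro x
    have := ((hasDerivAt_ccos lam x).const_mul A).add ((hasDerivAt_csin lam x).const_mul B)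
    convert this using 1
    · rfl
    · rfl
    simp only [hv', hB]
    field_simp
  have hv2 : ∀ x : ℝ, HasDerivAt v' (-(lam:ℂ)^2 * v x) x := by
    intro x
    have := ((hasDerivAt_csin lam x).const_mul (-(A * lam))).add ((hasDerivAt_ccos lam x).const_mul (u' 0))
    convert this using 1
    · rfl
    · rfl
    simp only [hv, hB]
    field_simp
    ring
  set w : ℝ → ℂ := fun x => u x - v x with hw
  set w' : ℝ → ℂ := fun x => u' x - v' x with hw'
  have hw1 : ∀ x ∈ Set.Icc (0:ℝ) 1, HasDerivWithinAt w (w' x) (Set.Icc (0:ℝ) 1) x :=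
    fun x hx => (hd1 x hx).sub (hv1 x).hasDerivWithinAt
  have hw2 : ∀ x ∈ Set.Icc (0:ℝ) 1, HasDerivWithinAt w' (-(lam:ℂ)^2 * w x) (Set.Icc (0:ℝ) 1) x := by
    intro x hx
    have := (hd2 x hx).sub (hv2 x).hasDerivWithinAt
    convert this using 1
    · rfl
    · rfl
    simp only [hw]
    ring
  have hw0 : w 0 = 0 := by
    simp only [hw, hv]
    norm_num [hA]
  have hw'0 : w' 0 = 0 := by
    simp only [hw', hv']
    norm_num
  have key : ∀ (s : ℝ) (hs : s = 1 ∨ s = -1), ∀ x ∈ Set.Icc (0:ℝ) 1,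
      w' x + s * Complex.I * lam * w x = 0 := by
    intro s hs
    set c : ℂ := -(s * Complex.I * lam) with hc
    set f : ℝ → ℂ := fun x => Complex.exp (c * x) * (w' x + s * Complex.I * lam * w x) with hf
    have hfd : ∀ x ∈ Set.Icc (0:ℝ) 1, HasDerivWithinAt f 0 (Set.Icc (0:ℝ) 1) x := by
      intro x hx
      have := ((hasDerivAt_cexp c x).hasDerivWithinAt.mul
        ((hw2 x hx).add ((hw1 x hx).const_mul (s * Complex.I * lam))))
      convert this using 1
      · rfl
      · rfl
      have hs2 : (s:ℂ)^2 = 1 := by rcases hs with h | h <;> simp [h]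
      simp only [hc, Pi.add_apply]
      linear_combination (Complex.exp (-(s * Complex.I * lam) * x) * (lam:ℂ)^2 * w x) *
        ((s:ℂ)^2 * Complex.I_sq - hs2)
    have hcont : ContinuousOn f (Set.Icc (0:ℝ) 1) := fun x hx => (hfd x hx).continuousWithinAt
    have hder : ∀ x ∈ Set.Ico (0:ℝ) 1, HasDerivWithinAt f 0 (Set.Ici x) x := fun x hx =>
      (hfd x ⟨hx.1, hx.2.le⟩).mono_of_mem_nhdsWithin (Icc_mem_nhdsGE_of_mem hx)
    have hconst := constant_of_has_deriv_right_zero hcont hder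
    intro x hx
    have hfx := hconst x hx
    have hf0 : f 0 = 0 := by simp [hf, hw0, hw'0]
    rw [hf0] at hfx
    rcases mul_eq_zero.mp hfx with h | h
    · exact absurd h (Complex.exp_ne_zero _)
    · exact h
  intro x hx
  have h1 := key 1 (Or.inl rfl) x hx
  have h2 := key (-1) (Or.inr rfl) x hx
  have hwx : w x = 0 := by
    have h3 : (2 * Complex.I * lam) * w x = 0 := by
      push_cast at h1 h2 ⊢
      linear_combination h1 - h2
    have h4 : (2 * Complex.I * (lam:ℂ)) ≠ 0 := by
      simp [Complex.I_ne_zero, hl]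
    exact (mul_eq_zero.mp h3).resolve_left h4
  have := sub_eq_zero.mp hwx
  simpa [hw, hv] using this

lemma cont_trig (lam : ℝ) (A B : ℂ) :
    Continuous (fun x : ℝ => A * Complex.cos ((lam*x:ℝ):ℂ) + B * Complex.sin ((lam*x:ℝ):ℂ)) := by
  fun_prop

lemma mu0_eq (lam : ℝ) (hlam : lam ≠ 0) (A B : ℂ) :
    (∫ x in (0:ℝ)..1, (A * Complex.cos ((lam*x:ℝ):ℂ) + B * Complex.sin ((lam*x:ℝ):ℂ))) =
      (A * (Real.sin lam : ℂ) + B * (1 - (Real.cos lam : ℂ))) / lam := by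
  have hl : (lam:ℂ) ≠ 0 := Complex.ofReal_ne_zero.mpr hlam
  have h := intervalIntegral.integral_eq_sub_of_hasDerivAt (a := (0:ℝ)) (b := 1)
    (f := fun x : ℝ => (A * Complex.sin ((lam*x:ℝ):ℂ) - B * Complex.cos ((lam*x:ℝ):ℂ)) / lam)
    (f' := fun x : ℝ => A * Complex.cos ((lam*x:ℝ):ℂ) + B * Complex.sin ((lam*x:ℝ):ℂ))
    (fun x _ => by
      have := (((hasDerivAt_csin lam x).const_mul A).sub ((hasDerivAt_ccos lam x).const_mul B)).div_const (lam:ℂ)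
      convert this using 1
      · rfl
      · rfl
      field_simp
      ring)
    ((cont_trig lam A B).intervalIntegrable 0 1)
  rw [h]
  norm_num
  field_simp
  ring

lemma mu1_eq (lam : ℝ) (hlam : lam ≠ 0) (A B : ℂ) :
    (∫ x in (0:ℝ)..1, ((1-x:ℝ):ℂ) * (A * Complex.cos ((lam*x:ℝ):ℂ) + B * Complex.sin ((lam*x:ℝ):ℂ))) =
      (A * (1 - (Real.cos lam : ℂ)) + B * ((lam:ℂ) - (Real.sin lam : ℂ))) / (lam:ℂ)^2 := by
  have hl : (lam:ℂ) ≠ 0 := Complex.ofReal_ne_zero.mpr hlam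
  have h := intervalIntegral.integral_eq_sub_of_hasDerivAt (a := (0:ℝ)) (b := 1)
    (f := fun x : ℝ => ((1-x:ℝ):ℂ) * (A * Complex.sin ((lam*x:ℝ):ℂ) - B * Complex.cos ((lam*x:ℝ):ℂ)) / lam
      - (A * Complex.cos ((lam*x:ℝ):ℂ) + B * Complex.sin ((lam*x:ℝ):ℂ)) / (lam:ℂ)^2)
    (f' := fun x : ℝ => ((1-x:ℝ):ℂ) * (A * Complex.cos ((lam*x:ℝ):ℂ) + B * Complex.sin ((lam*x:ℝ):ℂ)))
    (fun x _ => by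
      have h1 := (((hasDerivAt_om x).mul (((hasDerivAt_csin lam x).const_mul A).sub
        ((hasDerivAt_ccos lam x).const_mul B))).div_const (lam:ℂ)).sub
        ((((hasDerivAt_ccos lam x).const_mul A).add ((hasDerivAt_csin lam x).const_mul B)).div_const ((lam:ℂ)^2))
      convert h1 using 1
      · rfl
      simp only [Pi.sub_apply]
      field_simp
      ring)
    (by
      have : Continuous (fun x : ℝ => ((1-x:ℝ):ℂ) * (A * Complex.cos ((lam*x:ℝ):ℂ) + B * Complex.sin ((lam*x:ℝ):ℂ))) := by
        fun_prop
      exact this.intervalIntegrable 0 1)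
  rw [h]
  norm_num
  field_simp
  ring

lemma kern (lam : ℝ) (hlam : lam ≠ 0) (hD : lam * Real.sin lam + 2 * Real.cos lam - 2 = 0)
    (A B : ℂ) (e1 : A * (Real.sin lam : ℂ) + B * (1 - (Real.cos lam : ℂ)) = 0)
    (e2 : A * (1 - (Real.cos lam : ℂ)) + B * ((lam:ℂ) - (Real.sin lam : ℂ)) = 0) :
    ∃ z : ℂ, A = z * ((Real.sin lam : ℂ) - (lam:ℂ)) ∧ B = z * (1 - (Real.cos lam : ℂ)) := by
  have hl : (lam:ℂ) ≠ 0 := Complex.ofReal_ne_zero.mpr hlam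
  have hsc := Real.sin_sq_add_cos_sq lam
  have hscC : ((Real.sin lam : ℂ))^2 + ((Real.cos lam : ℂ))^2 = 1 := by exact_mod_cast hsc
  have hDC : (lam:ℂ) * (Real.sin lam : ℂ) + 2 * (Real.cos lam : ℂ) - 2 = 0 := by
    exact_mod_cast congrArg (Complex.ofReal) hD
  by_cases hc : Real.cos lam = 1
  · have hs2 : Real.sin lam ^ 2 = 0 := by nlinarith
    have hs : Real.sin lam = 0 := by
      exact pow_eq_zero_iff (n := 2) (by norm_num) |>.mp hs2
    have hB : B = 0 := by
      rw [hc, hs] at e2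
      push_cast at e2
      simp only [sub_self, mul_zero, zero_add, sub_zero] at e2
      rcases mul_eq_zero.mp e2 with h | h
      · exact h
      · exact absurd h hl
    refine ⟨A / (-(lam:ℂ)), ?_, ?_⟩
    · rw [hs]
      push_cast
      field_simp
      ring
    · rw [hB, hc]
      push_cast
      ring
  · have hcC : (1:ℂ) - (Real.cos lam : ℂ) ≠ 0 := by
      rw [sub_ne_zero]
      exact fun h => hc (by exact_mod_cast h.symm)
    have hs0 : Real.sin lam ≠ 0 := by
      intro h
      apply hc
      rw [h] at hD
      nlinarith
    have hsC : ((Real.sin lam : ℂ)) ≠ 0 := Complex.ofReal_ne_zero.mpr hs0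
    refine ⟨B / (1 - (Real.cos lam : ℂ)), ?_, (div_mul_cancel₀ B hcC).symm⟩
    have key : A * (1 - (Real.cos lam : ℂ)) = B * ((Real.sin lam : ℂ) - (lam:ℂ)) := by
      have h3 : (Real.sin lam : ℂ) * (A * (1 - (Real.cos lam : ℂ))) =
          (Real.sin lam : ℂ) * (B * ((Real.sin lam : ℂ) - (lam:ℂ))) := by
        linear_combination (1 - (Real.cos lam : ℂ)) * e1 + B * hDC - B * hscC
      exact mul_left_cancel₀ hsC h3
    rw [div_mul_eq_mul_div, eq_div_iff hcC]
    linear_combination key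

lemma sin_ne (lam : ℝ) (hlam : lam ≠ 0) :
    ∃ x ∈ Set.Icc (0:ℝ) 1, Real.sin (lam * x) ≠ 0 := by
  set x : ℝ := min 1 (1 / |lam|) with hx
  have hla : (0:ℝ) < |lam| := abs_pos.mpr hlam
  have hxpos : 0 < x := lt_min one_pos (by positivity)
  have hxle : x ≤ 1 := min_le_left _ _
  refine ⟨x, ⟨hxpos.le, hxle⟩, ?_⟩
  have hbound : |lam * x| ≤ 1 := by
    rw [abs_mul, abs_of_pos hxpos]
    calc |lam| * x ≤ |lam| * (1 / |lam|) := by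
          exact mul_le_mul_of_nonneg_left (min_le_right _ _) hla.le
      _ = 1 := by field_simp
  have h1 : -Real.pi < lam * x := by
    have := Real.pi_gt_three
    have := abs_le.mp hbound
    linarith
  have h2 : lam * x < Real.pi := by
    have := Real.pi_gt_three
    have := abs_le.mp hbound
    linarith
  intro h
  have := (Real.sin_eq_zero_iff_of_lt_of_lt h1 h2).mp h
  exact (mul_ne_zero hlam hxpos.ne') this

/-- For nonzero real `λ`: there is a nontrivial solution of `u″ = −λ²u` on `[0,1]` with
`μ₀(u) = μ₁(u) = 0` iff `λ sin λ + 2 cos λ − 2 = 0`; moreover in that case every such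
solution is a scalar multiple of `x ↦ (sin λ − λ) cos(λx) + (1 − cos λ) sin(λx)`. -/
theorem stmt13 (lam : ℝ) (hlam : lam ≠ 0) :
    ((∃ u u' : ℝ → ℂ,
        (∃ x ∈ Set.Icc (0:ℝ) 1, u x ≠ 0) ∧
        (∀ x ∈ Set.Icc (0:ℝ) 1, HasDerivWithinAt u (u' x) (Set.Icc (0:ℝ) 1) x) ∧
        (∀ x ∈ Set.Icc (0:ℝ) 1,
          HasDerivWithinAt u' (-(lam:ℂ)^2 * u x) (Set.Icc (0:ℝ) 1) x) ∧
        mu0 u = 0 ∧ mu1 u = 0)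
      ↔ lam * Real.sin lam + 2 * Real.cos lam - 2 = 0) ∧
    (lam * Real.sin lam + 2 * Real.cos lam - 2 = 0 →
      ∀ u u' : ℝ → ℂ,
        (∀ x ∈ Set.Icc (0:ℝ) 1, HasDerivWithinAt u (u' x) (Set.Icc (0:ℝ) 1) x) →
        (∀ x ∈ Set.Icc (0:ℝ) 1,
          HasDerivWithinAt u' (-(lam:ℂ)^2 * u x) (Set.Icc (0:ℝ) 1) x) →
        mu0 u = 0 → mu1 u = 0 →
        ∃ c : ℂ, ∀ x ∈ Set.Icc (0:ℝ) 1,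
          u x = c * (((Real.sin lam - lam) * Real.cos (lam * x) +
            (1 - Real.cos lam) * Real.sin (lam * x) : ℝ) : ℂ)) := by
  have hl : (lam:ℂ) ≠ 0 := Complex.ofReal_ne_zero.mpr hlam
  have hscC : ((Real.sin lam : ℂ))^2 + ((Real.cos lam : ℂ))^2 = 1 := by
    exact_mod_cast Real.sin_sq_add_cos_sq lam
  -- a common step: from the ODE + moments, derive the two linear equations on (A,B)
  have moments : ∀ u u' : ℝ → ℂ,
      (∀ x ∈ Set.Icc (0:ℝ) 1, HasDerivWithinAt u (u' x) (Set.Icc (0:ℝ) 1) x) →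
      (∀ x ∈ Set.Icc (0:ℝ) 1,
        HasDerivWithinAt u' (-(lam:ℂ)^2 * u x) (Set.Icc (0:ℝ) 1) x) →
      mu0 u = 0 → mu1 u = 0 →
      (u 0 * (Real.sin lam : ℂ) + (u' 0 / lam) * (1 - (Real.cos lam : ℂ)) = 0) ∧
      (u 0 * (1 - (Real.cos lam : ℂ)) + (u' 0 / lam) * ((lam:ℂ) - (Real.sin lam : ℂ)) = 0) := by
    intro u u' hd1 hd2 hm0 hm1
    have hrep := rep lam hlam u u' hd1 hd2
    set A : ℂ := u 0
    set B : ℂ := u' 0 / lam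
    have huIcc : Set.uIcc (0:ℝ) 1 = Set.Icc 0 1 := Set.uIcc_of_le zero_le_one
    have e0 : mu0 u = (A * (Real.sin lam : ℂ) + B * (1 - (Real.cos lam : ℂ))) / lam := by
      rw [mu0, intervalIntegral.integral_congr (g := fun x : ℝ =>
        A * Complex.cos ((lam*x:ℝ):ℂ) + B * Complex.sin ((lam*x:ℝ):ℂ))
        (fun x hx => hrep x (huIcc ▸ hx))]
      exact mu0_eq lam hlam A B
    have e1 : mu1 u = (A * (1 - (Real.cos lam : ℂ)) + B * ((lam:ℂ) - (Real.sin lam : ℂ))) / (lam:ℂ)^2 := by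
      rw [mu1, intervalIntegral.integral_congr (g := fun x : ℝ =>
        ((1-x:ℝ):ℂ) * (A * Complex.cos ((lam*x:ℝ):ℂ) + B * Complex.sin ((lam*x:ℝ):ℂ)))
        (fun x hx => by rw [hrep x (huIcc ▸ hx)])]
      exact mu1_eq lam hlam A B
    rw [e0] at hm0
    rw [e1] at hm1
    constructor
    · rcases div_eq_zero_iff.mp hm0 with h | h
      · exact h
      · exact absurd h hl
    · rcases div_eq_zero_iff.mp hm1 with h | h
      · exact h
      · exact absurd h (pow_ne_zero 2 hl)
  constructor
  · constructor
    · -- forward direction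
      rintro ⟨u, u', ⟨x0, hx0, hux0⟩, hd1, hd2, hm0, hm1⟩
      obtain ⟨eq1, eq2⟩ := moments u u' hd1 hd2 hm0 hm1
      set A : ℂ := u 0
      set B : ℂ := u' 0 / lam
      have hABne : ¬(A = 0 ∧ B = 0) := by
        rintro ⟨hA0, hB0⟩
        apply hux0
        rw [rep lam hlam u u' hd1 hd2 x0 hx0]
        show A * _ + B * _ = 0
        rw [hA0, hB0]
        ring
      have hDC : (lam:ℂ) * (Real.sin lam : ℂ) + 2 * (Real.cos lam : ℂ) - 2 = 0 := by
        have hAD : A * ((lam:ℂ) * (Real.sin lam : ℂ) + 2 * (Real.cos lam : ℂ) - 2) = 0 := by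
          linear_combination ((lam:ℂ) - (Real.sin lam : ℂ)) * eq1 - (1 - (Real.cos lam : ℂ)) * eq2 + A * hscC
        have hBD : B * ((lam:ℂ) * (Real.sin lam : ℂ) + 2 * (Real.cos lam : ℂ) - 2) = 0 := by
          linear_combination (Real.sin lam : ℂ) * eq2 - (1 - (Real.cos lam : ℂ)) * eq1 + B * hscC
        by_cases hA : A = 0
        · have hB : B ≠ 0 := fun hB => hABne ⟨hA, hB⟩
          exact (mul_eq_zero.mp hBD).resolve_left hB
        · exact (mul_eq_zero.mp hAD).resolve_left hA
      exact_mod_cast hDC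
    · -- backward direction
      intro hD
      have hDC : (lam:ℂ) * (Real.sin lam : ℂ) + 2 * (Real.cos lam : ℂ) - 2 = 0 := by
        exact_mod_cast congrArg (Complex.ofReal) hD
      set A : ℂ := ((Real.sin lam - lam : ℝ) : ℂ) with hA
      set B : ℂ := ((1 - Real.cos lam : ℝ) : ℂ) with hB
      set u : ℝ → ℂ := fun x => A * Complex.cos ((lam*x:ℝ):ℂ) + B * Complex.sin ((lam*x:ℝ):ℂ) with hu
      set u' : ℝ → ℂ := fun x => (lam:ℂ) * (B * Complex.cos ((lam*x:ℝ):ℂ) - A * Complex.sin ((lam*x:ℝ):ℂ)) with hu'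
      have hd1 : ∀ x ∈ Set.Icc (0:ℝ) 1, HasDerivWithinAt u (u' x) (Set.Icc (0:ℝ) 1) x := by
        intro x _
        have h := ((hasDerivAt_ccos lam x).const_mul A).add ((hasDerivAt_csin lam x).const_mul B)
        have : HasDerivAt u (u' x) x := by
          convert h using 1
          · rfl
          · rfl
          simp only [hu']
          ring
        exact this.hasDerivWithinAt
      have hd2 : ∀ x ∈ Set.Icc (0:ℝ) 1, HasDerivWithinAt u' (-(lam:ℂ)^2 * u x) (Set.Icc (0:ℝ) 1) x := by
        intro x _
        have h := (((hasDerivAt_ccos lam x).const_mul B).sub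
          ((hasDerivAt_csin lam x).const_mul A)).const_mul (lam:ℂ)
        have : HasDerivAt u' (-(lam:ℂ)^2 * u x) x := by
          convert h using 1
          · rfl
          · rfl
          simp only [hu]
          ring
        exact this.hasDerivWithinAt
      have hnz : ∃ x ∈ Set.Icc (0:ℝ) 1, u x ≠ 0 := by
        by_cases hA0 : A = 0
        · have hA0' : Real.sin lam = lam := by
            rw [hA, Complex.ofReal_eq_zero, sub_eq_zero] at hA0
            exact hA0
          have hB0 : B ≠ 0 := by
            rw [hB, Complex.ofReal_ne_zero]
            intro hc1
            have hc1' : Real.cos lam = 1 := by linarith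
            have : Real.sin lam ^ 2 = 0 := by nlinarith [Real.sin_sq_add_cos_sq lam]
            have hs : Real.sin lam = 0 := pow_eq_zero_iff (n := 2) (by norm_num) |>.mp this
            exact hlam (by rw [← hA0', hs])
          obtain ⟨x, hx, hsx⟩ := sin_ne lam hlam
          refine ⟨x, hx, ?_⟩
          simp only [hu, hA0, zero_mul, zero_add]
          rw [← Complex.ofReal_sin]
          exact mul_ne_zero hB0 (Complex.ofReal_ne_zero.mpr hsx)
        · refine ⟨0, ⟨le_refl 0, zero_le_one⟩, ?_⟩
          simp only [hu, mul_zero, Complex.ofReal_zero, Complex.cos_zero, Complex.sin_zero]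
          simpa using hA0
      have hm0 : mu0 u = 0 := by
        rw [mu0]
        show (∫ x in (0:ℝ)..1, (A * Complex.cos ((lam*x:ℝ):ℂ) + B * Complex.sin ((lam*x:ℝ):ℂ))) = 0
        rw [mu0_eq lam hlam A B]
        have hr0 : (Real.sin lam - lam) * Real.sin lam
            + (1 - Real.cos lam) * (1 - Real.cos lam) = 0 := by
          linear_combination Real.sin_sq_add_cos_sq lam - hD
        have hnum : A * (Real.sin lam : ℂ) + B * (1 - (Real.cos lam : ℂ)) = 0 := by
          rw [hA, hB]
          exact_mod_cast congrArg (Complex.ofReal) hr0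
        rw [hnum, zero_div]
      have hm1 : mu1 u = 0 := by
        rw [mu1]
        show (∫ x in (0:ℝ)..1, ((1-x:ℝ):ℂ) * (A * Complex.cos ((lam*x:ℝ):ℂ) + B * Complex.sin ((lam*x:ℝ):ℂ))) = 0
        rw [mu1_eq lam hlam A B]
        have hr1 : (Real.sin lam - lam) * (1 - Real.cos lam)
            + (1 - Real.cos lam) * (lam - Real.sin lam) = 0 := by ring
        have hnum : A * (1 - (Real.cos lam : ℂ)) + B * ((lam:ℂ) - (Real.sin lam : ℂ)) = 0 := by
          rw [hA, hB]
          exact_mod_cast congrArg (Complex.ofReal) hr1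
        rw [hnum, zero_div]
      exact ⟨u, u', hnz, hd1, hd2, hm0, hm1⟩
  · -- simplicity
    intro hD u u' hd1 hd2 hm0 hm1
    obtain ⟨eq1, eq2⟩ := moments u u' hd1 hd2 hm0 hm1
    obtain ⟨z, hA, hB⟩ := kern lam hlam hD (u 0) (u' 0 / lam) eq1 eq2
    refine ⟨z, fun x hx => ?_⟩
    rw [rep lam hlam u u' hd1 hd2 x hx, hA, hB]
    push_cast
    ring
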